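/- Let n ≥ 1, let φ : [0,1] × ℝⁿ → ℝⁿ be continuous, continuously differentiable in the second variable with the derivative jointly continuous, and suppose φ(t,0) = 0 for all t ∈ [0,1]. Let A(t) := D_u φ(t, ·)(0) ∈ L(ℝⁿ, ℝⁿ) be the derivative of φ(t, ·) at 0, and let V ⊆ ℝⁿ × ℝⁿ be a linear subspace. Assume that the only continuously differentiable function u : [0,1] → ℝⁿ satisfying u'(t) = A(t) u(t) for all t ∈ [0,1] and (u(0), u(1)) ∈ V is u ≡ 0. Then there exists ε > 0 such that every continuously differentiable function u : [0,1] → ℝⁿ satisfying u'(t) = φ(t, u(t)) for all t ∈ [0,1], (u(0), u(1)) ∈ V, and sup_{t ∈ [0,1]} ‖u(t)‖ ≤ ε is identically zero. In other words, if the linearised boundary value problem at the trivial solution has only the trivial solution, then the trivial solution of the nonlinear boundary value problem is isolated among small solutions. -/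

import Mathlib

open Set Metric Real Filter

section helpers

variable {E : Type*} [NormedAddCommGroup E] [NormedSpace ℝ E]

/-- Any vector is a derivative of any function within a singleton. -/
lemma hasDerivWithinAt_singleton' (f : ℝ → E) (x : ℝ) (d : E) :
    HasDerivWithinAt f d {x} x := by
  show HasFDerivWithinAt f (ContinuousLinearMap.smulRight (1 : ℝ →L[ℝ] ℝ) d) {x} x
  simp only [HasFDerivWithinAt, nhdsWithin_singleton, hasFDerivAtFilter_iff_isLittleO,
    Asymptotics.isLittleO_pure, sub_self]
  simp

/-- Convert a derivative within `Icc a b` at `t ∈ Ico a b` to a derivative within `Ici t`. -/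
lemma hasDerivWithinAt_Ici_of_Icc {f : ℝ → E} {d : E} {a b t : ℝ} (ht : t ∈ Set.Ico a b)
    (h : HasDerivWithinAt f d (Set.Icc a b) t) : HasDerivWithinAt f d (Set.Ici t) t := by
  have h1 : HasDerivWithinAt f d (Set.Icc t b) t := h.mono (Set.Icc_subset_Icc_left ht.1)
  apply h1.mono_of_mem_nhdsWithin
  rw [← Set.Ici_inter_Iic]
  exact inter_mem_nhdsWithin _ (Iic_mem_nhds ht.2)

/-- Glue two solutions of an ODE on adjacent intervals. -/
lemma glue_ode {v : ℝ → E → E} {w₁ w₂ : ℝ → E} {c d e : ℝ} (hcd : c ≤ d) (hde : d ≤ e)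
    (h₁ : ∀ t ∈ Set.Icc c d, HasDerivWithinAt w₁ (v t (w₁ t)) (Set.Icc c d) t)
    (h₂ : ∀ t ∈ Set.Icc d e, HasDerivWithinAt w₂ (v t (w₂ t)) (Set.Icc d e) t)
    (hj : w₁ d = w₂ d) :
    ∀ t ∈ Set.Icc c e, HasDerivWithinAt (fun s => if s ≤ d then w₁ s else w₂ s)
      (v t (if t ≤ d then w₁ t else w₂ t)) (Set.Icc c e) t := by
  set w := fun s => if s ≤ d then w₁ s else w₂ s with hw
  have hw1 : ∀ s ∈ Set.Icc c d, w s = w₁ s := fun s hs => if_pos hs.2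
  have hw2 : ∀ s ∈ Set.Icc d e, w s = w₂ s := by
    intro s hs
    rcases eq_or_lt_of_le hs.1 with h | h
    · simp only [hw, ← h, if_pos le_rfl, hj]
    · exact if_neg (not_le.2 h)
  intro t ht
  rcases lt_trichotomy t d with htd | htd | htd
  · rw [if_pos htd.le]
    have hmem : t ∈ Set.Icc c d := ⟨ht.1, htd.le⟩
    have base : HasDerivWithinAt w (v t (w₁ t)) (Set.Icc c d) t :=
      (h₁ t hmem).congr hw1 (hw1 t hmem)
    apply base.mono_of_mem_nhdsWithin
    have hmem2 : Set.Icc c e ∩ Set.Iio d ∈ nhdsWithin t (Set.Icc c e) :=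
      inter_mem_nhdsWithin _ (Iio_mem_nhds htd)
    exact Filter.mem_of_superset hmem2 (fun s hs => ⟨hs.1.1, hs.2.le⟩)
  · subst htd
    rw [if_pos le_rfl]
    have d₁ : HasDerivWithinAt w (v t (w₁ t)) (Set.Icc c t) t :=
      (h₁ t ⟨hcd, le_rfl⟩).congr hw1 (hw1 t ⟨hcd, le_rfl⟩)
    have d₂ : HasDerivWithinAt w (v t (w₁ t)) (Set.Icc t e) t := by
      have := (h₂ t ⟨le_rfl, hde⟩).congr hw2 (hw2 t ⟨le_rfl, hde⟩)
      rwa [← hj] at this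
    have := d₁.union d₂
    rwa [Set.Icc_union_Icc_eq_Icc hcd hde] at this
  · rw [if_neg (not_le.2 htd)]
    have hmem : t ∈ Set.Icc d e := ⟨htd.le, ht.2⟩
    have base : HasDerivWithinAt w (v t (w₂ t)) (Set.Icc d e) t :=
      (h₂ t hmem).congr hw2 (hw2 t hmem)
    apply base.mono_of_mem_nhdsWithin
    have hmem2 : Set.Icc c e ∩ Set.Ioi d ∈ nhdsWithin t (Set.Icc c e) :=
      inter_mem_nhdsWithin _ (Ioi_mem_nhds htd)
    exact Filter.mem_of_superset hmem2 (fun s hs => ⟨hs.2.le, hs.1.2⟩)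

/-- Global existence on `[0,1]` for an ODE with a globally Lipschitz right-hand side
vanishing at `0`. -/
lemma exists_ode_solution_Icc [CompleteSpace E] (v : ℝ → E → E) (L : ℝ) (hL : 0 ≤ L)
    (hlip : ∀ t, LipschitzWith L.toNNReal (v t))
    (hcont : ∀ x : E, Continuous fun t => v t x)
    (hv0 : ∀ t, v t 0 = 0) (x : E) :
    ∃ w : ℝ → E, w 0 = x ∧ ∀ t ∈ Set.Icc (0:ℝ) 1,
      HasDerivWithinAt w (v t (w t)) (Set.Icc (0:ℝ) 1) t := by
  set h : ℝ := 1 / (2 * L + 1) with hh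
  have h2L : 0 < 2 * L + 1 := by linarith
  have hhpos : 0 < h := by positivity
  have hnorm : ∀ t (z : E), ‖v t z‖ ≤ L * ‖z‖ := by
    intro t z
    have := (hlip t).dist_le_mul z 0
    simpa [hv0 t, dist_zero_right, Real.coe_toNNReal L hL] using this
  suffices H : ∀ (k : ℕ) (c : ℝ), c ≤ 1 → 1 ≤ c + k * h → ∀ y : E,
      ∃ w : ℝ → E, w c = y ∧ ∀ t ∈ Set.Icc c 1,
        HasDerivWithinAt w (v t (w t)) (Set.Icc c 1) t by
    obtain ⟨k, hk⟩ := exists_nat_ge (1 / h)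
    have hkh : 1 ≤ 0 + (k : ℝ) * h := by
      rw [zero_add]
      calc (1:ℝ) = (1/h) * h := by field_simp
        _ ≤ k * h := mul_le_mul_of_nonneg_right hk hhpos.le
    exact H k 0 zero_le_one hkh x
  intro k
  induction k with
  | zero =>
    intro c hc1 hc2 y
    push_cast at hc2
    rw [zero_mul, add_zero] at hc2
    have hceq : c = 1 := le_antisymm hc1 hc2
    subst hceq
    refine ⟨fun _ => y, rfl, ?_⟩
    intro t ht
    have h1 : t = 1 := le_antisymm ht.2 ht.1
    subst h1
    rw [Set.Icc_self]
    exact hasDerivWithinAt_singleton' _ _ _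
  | succ k ih =>
    intro c hc1 hck y
    set d := min 1 (c + h) with hd
    have hcd : c ≤ d := le_min hc1 (by linarith)
    have hd1 : d ≤ 1 := min_le_left _ _
    have hpl : IsPicardLindelof v (tmin := c) (tmax := d) ⟨c, Set.left_mem_Icc.2 hcd⟩ y
        (‖y‖₊ + 1) 0 (L * (2 * ‖y‖ + 1) + 1).toNNReal L.toNNReal :=
      { lipschitzOnWith := fun t _ => (hlip t).lipschitzOnWith
        continuousOn := fun z _ => (hcont z).continuousOn
        norm_le := by
          intro t _ z hz
          have h1 : ‖z - y‖ ≤ ‖y‖ + 1 := by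
            simpa [dist_eq_norm] using (mem_closedBall_iff_norm.1 hz)
          have h2 : ‖z‖ - ‖y‖ ≤ ‖z - y‖ := norm_sub_norm_le z y
          have h3 : ‖z‖ ≤ 2 * ‖y‖ + 1 := by linarith
          calc ‖v t z‖ ≤ L * ‖z‖ := hnorm t z
            _ ≤ L * (2 * ‖y‖ + 1) := mul_le_mul_of_nonneg_left h3 hL
            _ ≤ L * (2 * ‖y‖ + 1) + 1 := by linarith
            _ ≤ ((L * (2 * ‖y‖ + 1) + 1).toNNReal : ℝ) := Real.le_coe_toNNReal _
        mul_max_le := by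
          have hC' : (0:ℝ) ≤ L * (2 * ‖y‖ + 1) + 1 := by positivity
          show ((L * (2 * ‖y‖ + 1) + 1).toNNReal : ℝ) * max (d - c) (c - c) ≤
            ((‖y‖₊ + 1 : NNReal) : ℝ) - ((0:NNReal):ℝ)
          rw [Real.coe_toNNReal _ hC', NNReal.coe_add, coe_nnnorm, NNReal.coe_one,
            NNReal.coe_zero, sub_zero]
          have hmax : max (d - c) (c - c) = d - c := by
            rw [sub_self]; exact max_eq_left (by linarith)
          rw [hmax]
          have hdc : d - c ≤ h := by
            have : d ≤ c + h := min_le_right _ _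
            linarith
          have hC : (0:ℝ) ≤ L * (2 * ‖y‖ + 1) + 1 := by positivity
          calc (L * (2 * ‖y‖ + 1) + 1) * (d - c) ≤ (L * (2 * ‖y‖ + 1) + 1) * h :=
                mul_le_mul_of_nonneg_left hdc hC
            _ ≤ ‖y‖ + 1 := by
                rw [hh, mul_one_div, div_le_iff₀ h2L]
                nlinarith [norm_nonneg y, hL] }
    obtain ⟨w₁, hw₁0, hw₁⟩ := hpl.exists_eq_forall_mem_Icc_hasDerivWithinAt₀
    have hnext : 1 ≤ d + (k : ℝ) * h := by
      rcases le_or_gt (c + h) 1 with hch | hch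
      · have hde : d = c + h := min_eq_right hch
        push_cast at hck
        rw [hde]; linarith
      · have hde : d = 1 := min_eq_left hch.le
        have : (0:ℝ) ≤ (k : ℝ) * h := by positivity
        rw [hde]; linarith
    obtain ⟨w₂, hw₂0, hw₂⟩ := ih d hd1 hnext (w₁ d)
    refine ⟨fun s => if s ≤ d then w₁ s else w₂ s, ?_, ?_⟩
    · show (if c ≤ d then w₁ c else w₂ c) = y
      rw [if_pos hcd]; exact hw₁0
    exact glue_ode hcd hd1 hw₁ hw₂ hw₂0.symm

/-- Scaling of `infDist` to a submodule. -/
lemma smul_infDist_le {F : Type*} [NormedAddCommGroup F] [NormedSpace ℝ F]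
    (W : Submodule ℝ F) (p : F) {a : ℝ} (ha : 0 < a) :
    a * Metric.infDist p (W : Set F) ≤ Metric.infDist (a • p) (W : Set F) := by
  by_contra hcon
  push_neg at hcon
  obtain ⟨q, hq, hqd⟩ := (Metric.infDist_lt_iff ⟨0, W.zero_mem⟩).1 hcon
  have h1 : Metric.infDist p (W : Set F) ≤ dist p (a⁻¹ • q) :=
    Metric.infDist_le_dist_of_mem (W.smul_mem a⁻¹ hq)
  have h2 : dist p (a⁻¹ • q) = a⁻¹ * dist (a • p) q := by
    rw [← inv_smul_smul₀ ha.ne' p]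
    rw [dist_smul₀, Real.norm_eq_abs, abs_of_pos (inv_pos.2 ha), inv_smul_smul₀ ha.ne' p]
  have h3 : a⁻¹ * dist (a • p) q < a⁻¹ * (a * Metric.infDist p (W : Set F)) :=
    mul_lt_mul_of_pos_left hqd (inv_pos.2 ha)
  rw [← mul_assoc, inv_mul_cancel₀ ha.ne', one_mul] at h3
  rw [h2] at h1
  linarith

end helpers

section main

variable {E : Type*} [NormedAddCommGroup E] [NormedSpace ℝ E] [FiniteDimensional ℝ E]

set_option maxHeartbeats 1600000 in
lemma isolated_aux [Nontrivial E]
    (φ : ℝ → E → E)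
    (Dφ : ℝ → E → (E →L[ℝ] E))
    (hDφ : ∀ t ∈ Set.Icc (0:ℝ) 1, ∀ u, HasFDerivAt (φ t) (Dφ t u) u)
    (hDφcont : ContinuousOn (fun p : ℝ × E => Dφ p.1 p.2) (Set.Icc (0:ℝ) 1 ×ˢ Set.univ))
    (hφ0 : ∀ t ∈ Set.Icc (0:ℝ) 1, φ t 0 = 0)
    (A : ℝ → (E →L[ℝ] E)) (hA : ∀ t, A t = Dφ t 0)
    (V : Submodule ℝ (E × E))
    (hlin : ∀ u : ℝ → E,
      (∀ t ∈ Set.Icc (0:ℝ) 1, HasDerivWithinAt u (A t (u t)) (Set.Icc (0:ℝ) 1) t) →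
      (u 0, u 1) ∈ V → ∀ t ∈ Set.Icc (0:ℝ) 1, u t = 0) :
    ∃ ε > (0:ℝ), ∀ u : ℝ → E,
      (∀ t ∈ Set.Icc (0:ℝ) 1, HasDerivWithinAt u (φ t (u t)) (Set.Icc (0:ℝ) 1) t) →
      (u 0, u 1) ∈ V →
      (∀ t ∈ Set.Icc (0:ℝ) 1, ‖u t‖ ≤ ε) →
      ∀ t ∈ Set.Icc (0:ℝ) 1, u t = 0 := by
  classical
  -- a bound for the derivative on a compact set
  have hS : IsCompact ((Set.Icc (0:ℝ) 1) ×ˢ closedBall (0:E) 1) :=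
    isCompact_Icc.prod (isCompact_closedBall 0 1)
  have hDc : ContinuousOn (fun p : ℝ × E => Dφ p.1 p.2)
      ((Set.Icc (0:ℝ) 1) ×ˢ closedBall (0:E) 1) :=
    hDφcont.mono (Set.prod_mono_right (Set.subset_univ _))
  obtain ⟨K, hK⟩ := hS.exists_bound_of_continuousOn hDc
  set B : ℝ := max K 0 + 1 with hBdef
  have hB1 : 1 ≤ B := le_add_of_nonneg_left (le_max_right K 0)
  have hB0 : 0 < B := lt_of_lt_of_le one_pos hB1
  have hDB : ∀ t ∈ Set.Icc (0:ℝ) 1, ∀ z ∈ closedBall (0:E) 1, ‖Dφ t z‖ ≤ B := by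
    intro t ht z hz
    have h1 := hK (t, z) (Set.mem_prod.2 ⟨ht, hz⟩)
    have h2 : K ≤ B := by
      have := le_max_left K 0; rw [hBdef]; linarith
    exact h1.trans h2
  have hAB : ∀ t ∈ Set.Icc (0:ℝ) 1, ‖A t‖ ≤ B := fun t ht => by
    rw [hA]; exact hDB t ht 0 (mem_closedBall_self zero_le_one)
  -- clamping map
  set τ : ℝ → ℝ := fun t => max 0 (min 1 t) with hτdef
  have hτc : Continuous τ := continuous_const.max (continuous_const.min continuous_id)
  have hτmem : ∀ t, τ t ∈ Set.Icc (0:ℝ) 1 :=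
    fun t => ⟨le_max_left _ _, max_le zero_le_one (min_le_left _ _)⟩
  have hτid : ∀ t ∈ Set.Icc (0:ℝ) 1, τ t = t := by
    intro t ht
    rw [hτdef]; dsimp only
    rw [min_eq_right ht.2, max_eq_right ht.1]
  set Abar : ℝ → E →L[ℝ] E := fun t => Dφ (τ t) 0 with hAbardef
  have hAbarc : Continuous Abar := by
    have hc : Continuous fun t : ℝ => ((τ t, (0:E)) : ℝ × E) := hτc.prodMk continuous_const
    exact hDφcont.comp_continuous hc (fun t => Set.mem_prod.2 ⟨hτmem t, Set.mem_univ _⟩)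
  have hAbarA : ∀ t ∈ Set.Icc (0:ℝ) 1, Abar t = A t := by
    intro t ht
    rw [hAbardef]; dsimp only; rw [hτid t ht, hA]
  have hAbarB : ∀ t, ‖Abar t‖ ≤ B := fun t => hDB (τ t) (hτmem t) 0 (mem_closedBall_self zero_le_one)
  -- the linear vector field
  set v : ℝ → E → E := fun t z => Abar t z with hvdef
  have hvlip : ∀ t, LipschitzWith B.toNNReal (v t) := by
    intro t
    refine ((Abar t).lipschitz).weaken ?_
    refine (Real.le_toNNReal_iff_coe_le hB0.le).2 ?_
    rw [coe_nnnorm]; exact hAbarB t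
  have hvcont : ∀ z : E, Continuous fun t => v t z := fun z => hAbarc.clm_apply continuous_const
  have hv0 : ∀ t, v t 0 = 0 := fun t => (Abar t).map_zero
  have hexist := fun x : E => exists_ode_solution_Icc v B hB0.le hvlip hvcont hv0 x
  choose w hw0 hwode using hexist
  have hwcont : ∀ x, ContinuousOn (w x) (Set.Icc (0:ℝ) 1) :=
    fun x t ht => (hwode x t ht).continuousWithinAt
  have hwIci : ∀ x, ∀ t ∈ Set.Ico (0:ℝ) 1, HasDerivWithinAt (w x) (v t (w x t)) (Set.Ici t) t :=
    fun x t ht => hasDerivWithinAt_Ici_of_Icc ht (hwode x t (Set.Ico_subset_Icc_self ht))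
  have hBco : ((B.toNNReal : NNReal) : ℝ) = B := Real.coe_toNNReal B hB0.le
  -- two linear solutions diverge at most exponentially
  have hwdist : ∀ x z : E, ∀ t ∈ Set.Icc (0:ℝ) 1,
      dist (w x t) (w z t) ≤ dist x z * Real.exp B := by
    intro x z t ht
    have h1 := dist_le_of_trajectories_ODE (v := v) (K := B.toNNReal) hvlip
      (hwcont x) (hwIci x) (hwcont z) (hwIci z) (le_of_eq (by rw [hw0, hw0])) t ht
    refine h1.trans (mul_le_mul_of_nonneg_left ?_ dist_nonneg)
    apply Real.exp_le_exp.2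
    rw [hBco]
    nlinarith [ht.1, ht.2, hB0]
  have hwnorm : ∀ x : E, ∀ t ∈ Set.Icc (0:ℝ) 1, ‖w x t‖ ≤ ‖x‖ * Real.exp B := by
    intro x t ht
    have hg : ContinuousOn (fun _ : ℝ => (0:E)) (Set.Icc (0:ℝ) 1) := continuousOn_const
    have hg' : ∀ s ∈ Set.Ico (0:ℝ) 1,
        HasDerivWithinAt (fun _ : ℝ => (0:E)) (v s 0) (Set.Ici s) s := by
      intro s _
      rw [hv0]
      exact hasDerivWithinAt_const _ _ _
    have ha : dist (w x 0) ((fun _ : ℝ => (0:E)) 0) ≤ ‖x‖ := by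
      rw [hw0]; simp
    have h1 := dist_le_of_trajectories_ODE (v := v) (K := B.toNNReal) hvlip
      (hwcont x) (hwIci x) hg hg' ha t ht
    rw [dist_zero_right] at h1
    refine h1.trans (mul_le_mul_of_nonneg_left ?_ (norm_nonneg _))
    apply Real.exp_le_exp.2
    rw [hBco]
    nlinarith [ht.1, ht.2, hB0]
  -- homogeneity of the solution map
  have hwhom : ∀ (a : ℝ) (x : E), w (a • x) 1 = a • w x 1 := by
    intro a x
    have hg : ContinuousOn (fun t => a • w x t) (Set.Icc (0:ℝ) 1) := (hwcont x).const_smul a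
    have hg' : ∀ s ∈ Set.Ico (0:ℝ) 1,
        HasDerivWithinAt (fun t => a • w x t) (v s (a • w x s)) (Set.Ici s) s := by
      intro s hs
      have h1 := (hwIci x s hs).const_smul a
      have h2 : a • v s (w x s) = v s (a • w x s) := ((Abar s).map_smul a (w x s)).symm
      rwa [h2] at h1
    have huniq := ODE_solution_unique_of_mem_Icc_right (v := v) (K := B.toNNReal)
      (s := fun _ => Set.univ) (fun t _ => (hvlip t).lipschitzOnWith)
      (hwcont (a • x)) (hwIci (a • x)) (fun _ _ => trivial)
      hg hg' (fun _ _ => trivial) (by rw [hw0, hw0])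
    exact huniq ⟨zero_le_one, le_rfl⟩
  -- the boundary map and the distance function
  set y : E → E := fun x => w x 1 with hydef
  have hycont : Continuous y := by
    have hl : LipschitzWith (Real.exp B).toNNReal y := by
      apply LipschitzWith.of_dist_le_mul
      intro x z
      have h1 := hwdist x z 1 ⟨zero_le_one, le_rfl⟩
      rw [Real.coe_toNNReal _ (Real.exp_pos B).le, mul_comm]
      exact h1
    exact hl.continuous
  have hVclosed : IsClosed (V : Set (E × E)) := Submodule.closed_of_finiteDimensional V
  have hVne : (V : Set (E × E)).Nonempty := ⟨0, V.zero_mem⟩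
  set Fd : E → ℝ := fun x => Metric.infDist ((x, y x) : E × E) (V : Set (E × E)) with hFdef
  have hFcont : Continuous Fd :=
    (Metric.continuous_infDist_pt _).comp (continuous_id.prodMk hycont)
  have hFzero : ∀ x : E, Fd x = 0 → x = 0 := by
    intro x hx
    have hmem : ((x, y x) : E × E) ∈ (V : Set (E × E)) :=
      (hVclosed.mem_iff_infDist_zero hVne).2 hx
    have hode : ∀ t ∈ Set.Icc (0:ℝ) 1,
        HasDerivWithinAt (w x) (A t (w x t)) (Set.Icc (0:ℝ) 1) t := by
      intro t ht
      rw [← hAbarA t ht]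
      exact hwode x t ht
    have hbd : (w x 0, w x 1) ∈ V := by rw [hw0]; exact hmem
    have h0 := hlin (w x) hode hbd 0 ⟨le_rfl, zero_le_one⟩
    exact (hw0 x).symm.trans h0
  -- minimum of Fd on the unit sphere
  have hsphere : (sphere (0:E) 1).Nonempty := by
    obtain ⟨x, hx⟩ := exists_ne (0:E)
    have hnx : 0 < ‖x‖ := norm_pos_iff.2 hx
    refine ⟨‖x‖⁻¹ • x, ?_⟩
    rw [mem_sphere_zero_iff_norm, norm_smul, Real.norm_eq_abs,
      abs_of_pos (inv_pos.2 hnx), inv_mul_cancel₀ hnx.ne']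
  obtain ⟨xm, hxm_mem, hxm_min⟩ :=
    (isCompact_sphere (0:E) 1).exists_isMinOn hsphere hFcont.continuousOn
  set c := Fd xm with hcdef
  have hc0 : 0 < c := by
    rcases lt_or_eq_of_le (Metric.infDist_nonneg : 0 ≤ Fd xm) with h | h
    · exact h
    · exfalso
      have hz := hFzero xm h.symm
      rw [mem_sphere_zero_iff_norm, hz] at hxm_mem
      simp at hxm_mem
  have hlow : ∀ x : E, c * ‖x‖ ≤ Fd x := by
    intro x
    rcases eq_or_ne x 0 with rfl | hx
    · simpa using (Metric.infDist_nonneg : 0 ≤ Fd 0)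
    · have hnx : 0 < ‖x‖ := norm_pos_iff.2 hx
      set z := ‖x‖⁻¹ • x with hzdef
      have hz1 : ‖z‖ = 1 := by
        rw [hzdef, norm_smul, Real.norm_eq_abs, abs_of_pos (inv_pos.2 hnx),
          inv_mul_cancel₀ hnx.ne']
      have hxz : x = ‖x‖ • z := by rw [hzdef, smul_inv_smul₀ hnx.ne']
      have hyz : y x = ‖x‖ • y z := by
        conv_lhs => rw [hxz]
        exact hwhom ‖x‖ z
      have hpair : ((x, y x) : E × E) = ‖x‖ • ((z, y z) : E × E) := by
        rw [Prod.smul_mk, Prod.mk.injEq]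
        exact ⟨hxz, hyz⟩
      have hsm := smul_infDist_le V ((z, y z) : E × E) hnx
      have hmin : c ≤ Fd z := isMinOn_iff.1 hxm_min z (by rw [mem_sphere_zero_iff_norm]; exact hz1)
      calc c * ‖x‖ = ‖x‖ * c := mul_comm _ _
        _ ≤ ‖x‖ * Fd z := mul_le_mul_of_nonneg_left hmin hnx.le
        _ ≤ Metric.infDist (‖x‖ • ((z, y z) : E × E)) (V : Set (E × E)) := hsm
        _ = Fd x := by rw [← hpair]
  -- choice of the smallness parameters
  set M : ℝ := Real.exp (B + 1) * Real.exp B with hMdef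
  have hM0 : 0 < M := mul_pos (Real.exp_pos _) (Real.exp_pos _)
  set η : ℝ := min 1 (c / (2 * M)) with hηdef
  have hη0 : 0 < η := lt_min one_pos (by positivity)
  have hη1 : η ≤ 1 := min_le_left _ _
  have hηM : η * M ≤ c / 2 := by
    have h1 : η ≤ c / (2 * M) := min_le_right _ _
    calc η * M ≤ (c / (2 * M)) * M := mul_le_mul_of_nonneg_right h1 hM0.le
      _ = c / 2 := by field_simp
  have hUC := hS.uniformContinuousOn_of_continuous hDc
  rw [Metric.uniformContinuousOn_iff] at hUC
  obtain ⟨δ, hδ0, hδ⟩ := hUC η hη0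
  set r : ℝ := min (δ / 2) 1 with hrdef
  have hr0 : 0 < r := lt_min (by linarith) one_pos
  have hr1 : r ≤ 1 := min_le_right _ _
  have hrδ : r < δ := lt_of_le_of_lt (min_le_left _ _) (by linarith)
  have hder : ∀ t ∈ Set.Icc (0:ℝ) 1, ∀ z : E, ‖z‖ ≤ r → ‖Dφ t z - A t‖ ≤ η := by
    intro t ht z hz
    have hz1 : z ∈ closedBall (0:E) 1 := by
      rw [mem_closedBall_zero_iff]; exact hz.trans hr1
    have hd : dist ((t, z) : ℝ × E) ((t, (0:E)) : ℝ × E) < δ := by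
      rw [Prod.dist_eq]
      have : max (dist t t) (dist z 0) = ‖z‖ := by
        rw [dist_self, dist_zero_right]
        exact max_eq_right (norm_nonneg _)
      rw [this]
      exact lt_of_le_of_lt hz hrδ
    have h1 := hδ (t, z) (Set.mem_prod.2 ⟨ht, hz1⟩) (t, (0:E))
      (Set.mem_prod.2 ⟨ht, mem_closedBall_self zero_le_one⟩) hd
    rw [hA]
    calc ‖Dφ t z - Dφ t 0‖ = dist (Dφ t z) (Dφ t 0) := (dist_eq_norm _ _).symm
      _ ≤ η := le_of_lt h1
  have hMVT : ∀ t ∈ Set.Icc (0:ℝ) 1, ∀ z : E, ‖z‖ ≤ r → ‖φ t z - A t z‖ ≤ η * ‖z‖ := by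
    intro t ht z hz
    have hconv : Convex ℝ (closedBall (0:E) r) := convex_closedBall _ _
    have happ := Convex.norm_image_sub_le_of_norm_hasFDerivWithin_le'
      (f := φ t) (f' := Dφ t) (φ := A t) (C := η) (s := closedBall (0:E) r)
      (x := (0:E)) (y := z)
      (fun p _ => (hDφ t ht p).hasFDerivWithinAt)
      (fun p hp => hder t ht p (by rwa [mem_closedBall_zero_iff] at hp))
      hconv (mem_closedBall_self hr0.le) (by rwa [mem_closedBall_zero_iff])
    simp only [hφ0 t ht, sub_zero] at happ
    exact happ
  -- the conclusion
  refine ⟨r, hr0, ?_⟩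
  intro u hu huV hus
  have hucont : ContinuousOn u (Set.Icc (0:ℝ) 1) := fun s hs => (hu s hs).continuousWithinAt
  have hu' : ∀ s ∈ Set.Ico (0:ℝ) 1, HasDerivWithinAt u (φ s (u s)) (Set.Ici s) s :=
    fun s hs => hasDerivWithinAt_Ici_of_Icc hs (hu s (Set.Ico_subset_Icc_self hs))
  have hgrow : ∀ s ∈ Set.Icc (0:ℝ) 1, ‖u s‖ ≤ ‖u 0‖ * Real.exp (B + 1) := by
    intro s hs
    have hbound : ∀ p ∈ Set.Ico (0:ℝ) 1, ‖φ p (u p)‖ ≤ (B + 1) * ‖u p‖ + 0 := by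
      intro p hp
      have hpI := Set.Ico_subset_Icc_self hp
      have h1 : ‖φ p (u p) - A p (u p)‖ ≤ η * ‖u p‖ := hMVT p hpI (u p) (hus p hpI)
      have h2 : ‖A p (u p)‖ ≤ B * ‖u p‖ :=
        le_trans ((A p).le_opNorm _) (mul_le_mul_of_nonneg_right (hAB p hpI) (norm_nonneg _))
      have h3 : ‖φ p (u p)‖ ≤ ‖A p (u p)‖ + ‖φ p (u p) - A p (u p)‖ := by
        have h4 := norm_add_le (A p (u p)) (φ p (u p) - A p (u p))
        simpa using h4
      have hη' : η * ‖u p‖ ≤ 1 * ‖u p‖ := mul_le_mul_of_nonneg_right hη1 (norm_nonneg _)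
      nlinarith [norm_nonneg (u p)]
    have h5 := norm_le_gronwallBound_of_norm_deriv_right_le (δ := ‖u 0‖) (K := B + 1) (ε := 0)
      hucont hu' le_rfl hbound s hs
    rw [gronwallBound_ε0] at h5
    refine h5.trans (mul_le_mul_of_nonneg_left ?_ (norm_nonneg _))
    apply Real.exp_le_exp.2
    nlinarith [hs.1, hs.2, hB0]
  set x := u 0 with hxdef
  set εf : ℝ := η * (‖x‖ * Real.exp (B + 1)) with hεfdef
  have hεf0 : 0 ≤ εf := by positivity
  have hfbound : ∀ s ∈ Set.Ico (0:ℝ) 1, dist (φ s (u s)) (v s (u s)) ≤ εf := by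
    intro s hs
    have hsI := Set.Ico_subset_Icc_self hs
    rw [dist_eq_norm]
    have h1 : v s (u s) = A s (u s) := by rw [← hAbarA s hsI]
    rw [h1]
    refine (hMVT s hsI (u s) (hus s hsI)).trans ?_
    rw [hεfdef]
    exact mul_le_mul_of_nonneg_left (hgrow s hsI) hη0.le
  have hgbound : ∀ s ∈ Set.Ico (0:ℝ) 1, dist (v s (w x s)) (v s (w x s)) ≤ 0 := by
    intro s _; rw [dist_self]
  have ha0 : dist (u 0) (w x 0) ≤ (0:ℝ) := by rw [hw0]; simp [hxdef]
  have hcomp := dist_le_of_approx_trajectories_ODE (v := v) (K := B.toNNReal)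
    (f' := fun s => φ s (u s)) (g' := fun s => v s (w x s)) hvlip
    hucont hu' hfbound (hwcont x) (hwIci x) hgbound ha0 1 ⟨zero_le_one, le_rfl⟩
  rw [hBco] at hcomp
  have hgb : gronwallBound (0:ℝ) B (εf + 0) (1 - 0) ≤ εf * Real.exp B := by
    rw [gronwallBound_of_K_ne_0 hB0.ne']
    norm_num
    rw [div_mul_eq_mul_div, div_le_iff₀ hB0]
    have key : 0 ≤ εf * Real.exp B * (B - 1) :=
      mul_nonneg (mul_nonneg hεf0 (Real.exp_pos B).le) (by linarith)
    nlinarith [hεf0, Real.exp_pos B]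
  have hFle : Fd x ≤ εf * Real.exp B := by
    have hmemV : ((x, u 1) : E × E) ∈ (V : Set (E × E)) := huV
    have h1 : Fd x ≤ dist ((x, y x) : E × E) ((x, u 1) : E × E) :=
      Metric.infDist_le_dist_of_mem hmemV
    have h2 : dist ((x, y x) : E × E) ((x, u 1) : E × E) = dist (u 1) (w x 1) := by
      rw [Prod.dist_eq]
      simp only [dist_self]
      rw [max_eq_right dist_nonneg, dist_comm]
    rw [h2] at h1
    exact h1.trans (hcomp.trans hgb)
  have hxzero : x = 0 := by
    have h1 : c * ‖x‖ ≤ εf * Real.exp B := (hlow x).trans hFle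
    have h2 : εf * Real.exp B = η * M * ‖x‖ := by rw [hεfdef, hMdef]; ring
    rw [h2] at h1
    have h3 : η * M * ‖x‖ ≤ (c / 2) * ‖x‖ := mul_le_mul_of_nonneg_right hηM (norm_nonneg _)
    have h4 : c * ‖x‖ ≤ (c / 2) * ‖x‖ := h1.trans h3
    have hxn : ‖x‖ ≤ 0 := by nlinarith
    exact norm_le_zero_iff.1 hxn
  intro t ht
  have h5 := hgrow t ht
  rw [hxzero] at h5
  simp only [norm_zero, zero_mul] at h5
  exact norm_le_zero_iff.1 h5

end main

/-- If the boundary value problem linearised at the trivial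
solution, `u' = A(t)u`, `(u(0), u(1)) ∈ V`, has only the trivial solution, then
the trivial solution of the nonlinear problem `u' = φ(t, u)`, `(u(0), u(1)) ∈ V`
is isolated among small solutions: there is `ε > 0` such that every solution
with `sup-norm ≤ ε` on `[0,1]` vanishes identically. -/
theorem trivial_solution_isolated
    (n : ℕ) (hn : 1 ≤ n)
    (φ : ℝ → EuclideanSpace ℝ (Fin n) → EuclideanSpace ℝ (Fin n))
    (hφcont : ContinuousOn (fun p : ℝ × EuclideanSpace ℝ (Fin n) => φ p.1 p.2)
      (Set.Icc (0 : ℝ) 1 ×ˢ Set.univ))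
    (Dφ : ℝ → EuclideanSpace ℝ (Fin n) →
      (EuclideanSpace ℝ (Fin n) →L[ℝ] EuclideanSpace ℝ (Fin n)))
    (hDφ : ∀ t ∈ Set.Icc (0 : ℝ) 1, ∀ u, HasFDerivAt (φ t) (Dφ t u) u)
    (hDφcont : ContinuousOn (fun p : ℝ × EuclideanSpace ℝ (Fin n) => Dφ p.1 p.2)
      (Set.Icc (0 : ℝ) 1 ×ˢ Set.univ))
    (hφ0 : ∀ t ∈ Set.Icc (0 : ℝ) 1, φ t 0 = 0)
    (A : ℝ → (EuclideanSpace ℝ (Fin n) →L[ℝ] EuclideanSpace ℝ (Fin n)))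
    (hA : ∀ t, A t = Dφ t 0)
    (V : Submodule ℝ (EuclideanSpace ℝ (Fin n) × EuclideanSpace ℝ (Fin n)))
    (hlin : ∀ u : ℝ → EuclideanSpace ℝ (Fin n),
      (∀ t ∈ Set.Icc (0 : ℝ) 1,
        HasDerivWithinAt u (A t (u t)) (Set.Icc (0 : ℝ) 1) t) →
      (u 0, u 1) ∈ V → ∀ t ∈ Set.Icc (0 : ℝ) 1, u t = 0) :
    ∃ ε > (0 : ℝ), ∀ u : ℝ → EuclideanSpace ℝ (Fin n),
      (∀ t ∈ Set.Icc (0 : ℝ) 1,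
        HasDerivWithinAt u (φ t (u t)) (Set.Icc (0 : ℝ) 1) t) →
      (u 0, u 1) ∈ V →
      (∀ t ∈ Set.Icc (0 : ℝ) 1, ‖u t‖ ≤ ε) →
      ∀ t ∈ Set.Icc (0 : ℝ) 1, u t = 0 := by
  have hne : (EuclideanSpace.single (⟨0, hn⟩ : Fin n) (1:ℝ)) ≠ 0 := by
    intro h
    have h1 := congrArg norm h
    rw [EuclideanSpace.norm_single, norm_zero, norm_one] at h1
    exact one_ne_zero h1
  haveI : Nontrivial (EuclideanSpace ℝ (Fin n)) := nontrivial_of_ne _ _ hne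
  exact isolated_aux φ Dφ hDφ hDφcont hφ0 A hA V hlin
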